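/- Let P(r,n;A,D,Γ) and P(r',n';A',D',Γ') be pentads of Cartan type with rank D = n and rank D' = n'. If these pentads are equivalent, then their Cartan matrices are equivalent: there exist an invertible diagonal matrix Γ̃ ∈ M(n,n;ℂ) and a permutation matrix E_π ∈ M(n,n;ℂ) such that C(A,D,Γ) = Γ̃ · ᵗE_π · C(A',D',Γ') · E_π. -/

import Mathlib

noncomputable section

open Matrix

/-- The representation `□_D^r` of the abelian Lie algebra `ℂ^r` on `ℂ_D^Γ = ℂⁿ`:
`□_D^r(ε_i ⊗ e_j) = d_{ij} e_j`. -/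
def boxD {r n : ℕ} (D : Matrix (Fin r) (Fin n) ℂ) (a : Fin r → ℂ) (v : Fin n → ℂ) :
    Fin n → ℂ :=
  fun j => (∑ i, a i * D i j) * v j

/-- The representation `□_{-D}^r` of `ℂ^r` on `ℂ_{-D}^Γ = ℂⁿ`:
`□_{-D}^r(ε_i ⊗ f_j) = -d_{ij} f_j`. -/
def boxNegD {r n : ℕ} (D : Matrix (Fin r) (Fin n) ℂ) (a : Fin r → ℂ) (φ : Fin n → ℂ) :
    Fin n → ℂ :=
  fun j => -((∑ i, a i * D i j) * φ j)

/-- The pairing `⟨e_i, f_j⟩_D^Γ = δ_{ij} γ_i`. -/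
def pairG {n : ℕ} (γ : Fin n → ℂ) (v φ : Fin n → ℂ) : ℂ :=
  ∑ j, γ j * (v j * φ j)

/-- The bilinear form `B_A(x, y) = ᵗx · ᵗA⁻¹ · y` on `ℂ^r`. -/
def bilinA {r : ℕ} (A : Matrix (Fin r) (Fin r) ℂ) (x y : Fin r → ℂ) : ℂ :=
  x ⬝ᵥ ((A⁻¹)ᵀ *ᵥ y)

/-- `h_i`, the `i`-th column of `ᵗA · D · Γ`. -/
def hvec {r n : ℕ} (A : Matrix (Fin r) (Fin r) ℂ) (D : Matrix (Fin r) (Fin n) ℂ)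
    (γ : Fin n → ℂ) (i : Fin n) : Fin r → ℂ :=
  fun k => (Aᵀ * D * Matrix.diagonal γ) k i

/-- The Cartan matrix `C(A, D, Γ) = Γ · ᵗD · A · D` of the pentad of Cartan type
`P(r, n; A, D, Γ)`. -/
def cartanC {r n : ℕ} (A : Matrix (Fin r) (Fin r) ℂ) (D : Matrix (Fin r) (Fin n) ℂ)
    (γ : Fin n → ℂ) : Matrix (Fin n) (Fin n) ℂ :=
  Matrix.diagonal γ * Dᵀ * A * D

/-- The permutation matrix `E_π = (δ_{j, π i})_{ij}`. -/
def permMat {n : ℕ} (π : Equiv.Perm (Fin n)) : Matrix (Fin n) (Fin n) ℂ :=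
  fun i j => if j = π i then 1 else 0

/-- The annihilator `Ann ℂ_D^Γ = {a ∈ ℂ^r : □_D^r(a ⊗ v) = 0 for all v}`. -/
def annD {r n : ℕ} (D : Matrix (Fin r) (Fin n) ℂ) : Submodule ℂ (Fin r → ℂ) where
  carrier := {a | ∀ v, boxD D a v = 0}
  add_mem' := by
    intro a b ha hb v
    funext j
    have h1 := congrFun (ha v) j
    have h2 := congrFun (hb v) j
    simp only [boxD, Pi.zero_apply] at h1 h2 ⊢
    simp only [Pi.add_apply, add_mul, Finset.sum_add_distrib]
    rw [h1, h2, add_zero]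
  zero_mem' := by
    intro v
    funext j
    simp [boxD]
  smul_mem' := by
    intro c a ha v
    funext j
    have h := congrFun (ha v) j
    simp only [boxD, Pi.zero_apply] at h ⊢
    have hsum : ∑ i, (c • a) i * D i j = c * ∑ i, a i * D i j := by
      rw [Finset.mul_sum]
      refine Finset.sum_congr rfl fun i _ => ?_
      simp [mul_assoc]
    rw [hsum, mul_assoc, h, mul_zero]


lemma aux_inj {r n : ℕ} (D : Matrix (Fin r) (Fin n) ℂ) (hD : D.rank = n) :
    Function.Injective D.mulVecLin := by
  rw [← LinearMap.ker_eq_bot]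
  have h := D.mulVecLin.finrank_range_add_finrank_ker
  rw [Matrix.rank] at hD
  rw [hD, Module.finrank_pi] at h
  simp at h
  exact h

lemma eigen_key {r n r' n' : ℕ} (D : Matrix (Fin r) (Fin n) ℂ) (D' : Matrix (Fin r') (Fin n') ℂ)
    (hD' : Function.Injective D'.mulVecLin)
    (τ : (Fin r → ℂ) ≃ₗ[ℂ] (Fin r' → ℂ)) (σ : (Fin n → ℂ) ≃ₗ[ℂ] (Fin n' → ℂ))
    (hσ : ∀ a v, σ (boxD D a v) = boxD D' (τ a) (σ v)) :
    ∃ π : Fin n → Fin n', Function.Injective π ∧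
      (∀ j a, (∑ i, a i * D i j) = ∑ i, τ a i * D' i (π j)) := by
  have hbox : ∀ (a : Fin r → ℂ) (j : Fin n),
      boxD D a (Pi.single j 1) = (∑ i, a i * D i j) • (Pi.single j 1 : Fin n → ℂ) := by
    intro a j
    funext k
    simp only [boxD, Pi.smul_apply, smul_eq_mul]
    rcases eq_or_ne k j with rfl | hkj
    · simp
    · rw [Pi.single_eq_of_ne hkj]; ring
  have hw : ∀ (j : Fin n) (a : Fin r → ℂ) (k : Fin n'),
      (∑ i, τ a i * D' i k) * σ (Pi.single j 1) k
        = (∑ i, a i * D i j) * σ (Pi.single j 1) k := by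
    intro j a k
    have h1 := congrFun (hσ a (Pi.single j 1)) k
    rw [hbox, σ.map_smul] at h1
    simpa [boxD] using h1.symm
  have hsupp : ∀ (j : Fin n) (k k' : Fin n'), σ (Pi.single j 1) k ≠ 0 →
      σ (Pi.single j 1) k' ≠ 0 → k = k' := by
    intro j k k' hk hk'
    have hcol : (fun m => D' m k) = fun m => D' m k' := by
      funext m
      have h1 := mul_right_cancel₀ hk (hw j (τ.symm (Pi.single m 1)) k)
      have h2 := mul_right_cancel₀ hk' (hw j (τ.symm (Pi.single m 1)) k')
      rw [τ.apply_symm_apply] at h1 h2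
      have h3 := h1.trans h2.symm
      simpa [Pi.single_apply, ite_mul] using h3
    have heq : D'.mulVecLin (Pi.single k 1) = D'.mulVecLin (Pi.single k' 1) := by
      simp only [Matrix.mulVecLin_apply, Matrix.mulVec_single, mul_one]
      ext m; simpa using congrFun hcol m
    have h4 := hD' heq
    by_contra hne
    have h5 := congrFun h4 k
    rw [Pi.single_eq_same, Pi.single_eq_of_ne hne] at h5
    exact one_ne_zero h5
  have hne : ∀ j : Fin n, σ (Pi.single j 1) ≠ 0 := by
    intro j h
    have h0 : (Pi.single j 1 : Fin n → ℂ) = 0 := by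
      apply σ.injective
      simp [h]
    have := congrFun h0 j
    simp at this
  have hex : ∀ j : Fin n, ∃ k, σ (Pi.single j 1) k ≠ 0 := by
    intro j
    by_contra h
    push_neg at h
    exact hne j (funext fun k => h k)
  choose π hπ using hex
  refine ⟨π, ?_, ?_⟩
  · intro j j' hjj
    by_contra hne'
    set c : ℂ := σ (Pi.single j' 1) (π j) / σ (Pi.single j 1) (π j) with hc
    have hzero : ∀ k, k ≠ π j → σ (Pi.single j 1) k = 0 := by
      intro k hk
      by_contra h
      exact hk (hsupp j k (π j) h (hπ j))
    have hzero' : ∀ k, k ≠ π j' → σ (Pi.single j' 1) k = 0 := by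
      intro k hk
      by_contra h
      exact hk (hsupp j' k (π j') h (hπ j'))
    have heq : σ (Pi.single j' 1) = c • σ (Pi.single j 1) := by
      funext k
      rcases eq_or_ne k (π j) with rfl | hk
      · rw [Pi.smul_apply, smul_eq_mul, hc, div_mul_cancel₀ _ (hπ j)]
      · rw [Pi.smul_apply, smul_eq_mul, hzero k hk, mul_zero, hzero' k (hjj ▸ hk)]
    rw [← σ.map_smul] at heq
    have h5 := σ.injective heq
    have h6 := congrFun h5 j'
    rw [Pi.single_eq_same, Pi.smul_apply, Pi.single_eq_of_ne (Ne.symm hne'), smul_eq_mul,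
      mul_zero] at h6
    exact one_ne_zero h6
  · intro j a
    exact (mul_right_cancel₀ (hπ j) (hw j a (π j))).symm

lemma permMat_conj {n : ℕ} (ρ : Equiv.Perm (Fin n)) (M : Matrix (Fin n) (Fin n) ℂ) (j k : Fin n) :
    ((permMat ρ)ᵀ * M * permMat ρ) j k = M (ρ.symm j) (ρ.symm k) := by
  simp only [Matrix.mul_apply, permMat, Matrix.transpose_apply]
  simp [← Equiv.symm_apply_eq, ite_mul, mul_ite]

lemma cartan_entry {r n : ℕ} (A : Matrix (Fin r) (Fin r) ℂ) (D : Matrix (Fin r) (Fin n) ℂ)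
    (γ : Fin n → ℂ) (j k : Fin n) :
    cartanC A D γ j k = γ j * ((fun m => D m j) ⬝ᵥ (A *ᵥ fun m => D m k)) := by
  rw [cartanC, Matrix.mul_assoc, Matrix.mul_assoc, Matrix.diagonal_mul,
    Matrix.dotProduct_mulVec]
  congr 1
  simp only [Matrix.mul_apply, Matrix.vecMul, dotProduct, Matrix.transpose_apply,
    Matrix.mulVec, Finset.mul_sum, Finset.sum_mul]
  rw [Finset.sum_comm]
  exact Finset.sum_congr rfl fun q _ => Finset.sum_congr rfl fun p _ => by ring

lemma bilin_matrix {r r' : ℕ} (A : Matrix (Fin r) (Fin r) ℂ) (A' : Matrix (Fin r') (Fin r') ℂ)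
    (T : Matrix (Fin r') (Fin r) ℂ) (c₀ : ℂ)
    (h : ∀ p q : Fin r, bilinA A (Pi.single p 1) (Pi.single q 1)
      = c₀ * bilinA A' (T *ᵥ Pi.single p 1) (T *ᵥ Pi.single q 1)) :
    (A⁻¹)ᵀ = c₀ • (Tᵀ * ((A'⁻¹)ᵀ * T)) := by
  ext p q
  have h1 := h p q
  rw [bilinA, bilinA, Matrix.mulVec_mulVec, Matrix.mulVec_single, Matrix.mulVec_single,
    single_dotProduct] at h1
  simp only [mul_one, one_mul, MulOpposite.op_one, one_smul, Matrix.col_apply] at h1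
  rw [Matrix.smul_apply, Matrix.mul_apply]
  rw [h1]
  simp [dotProduct, Matrix.mul_apply, Matrix.transpose_apply, smul_eq_mul]


/-- If pentads of Cartan type `P(r,n;A,D,Γ)` and `P(r',n';A',D',Γ')` with
`rank D = n`, `rank D' = n'` are equivalent, then their Cartan matrices are equivalent:
`C(A,D,Γ) = Γ̃ · ᵗE_π · C(A',D',Γ') · E_π` for some invertible diagonal `Γ̃` and
permutation matrix `E_π`. -/
theorem stmt_12 (r n r' n' : ℕ) (hr : 0 < r) (hn : 0 < n) (hr' : 0 < r') (hn' : 0 < n')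
    (A : Matrix (Fin r) (Fin r) ℂ) (hA : IsUnit A.det)
    (D : Matrix (Fin r) (Fin n) ℂ)
    (γ : Fin n → ℂ) (hγ : ∀ j, γ j ≠ 0)
    (A' : Matrix (Fin r') (Fin r') ℂ) (hA' : IsUnit A'.det)
    (D' : Matrix (Fin r') (Fin n') ℂ)
    (γ' : Fin n' → ℂ) (hγ' : ∀ j, γ' j ≠ 0)
    (hD : D.rank = n) (hD' : D'.rank = n')
    -- the pentads are equivalent:
    (c₀ : ℂ) (hc₀ : c₀ ≠ 0)
    (τ : (Fin r → ℂ) ≃ₗ[ℂ] (Fin r' → ℂ))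
    (σ : (Fin n → ℂ) ≃ₗ[ℂ] (Fin n' → ℂ))
    (ς : (Fin n → ℂ) ≃ₗ[ℂ] (Fin n' → ℂ))
    (hσ : ∀ (a : Fin r → ℂ) (v : Fin n → ℂ), σ (boxD D a v) = boxD D' (τ a) (σ v))
    (hς : ∀ (a : Fin r → ℂ) (φ : Fin n → ℂ), ς (boxNegD D a φ) = boxNegD D' (τ a) (ς φ))
    (hτB : ∀ a b : Fin r → ℂ, bilinA A a b = c₀ * bilinA A' (τ a) (τ b))
    (hpair : ∀ (v φ : Fin n → ℂ), pairG γ v φ = pairG γ' (σ v) (ς φ)) :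
    ∃ (hnn : n = n') (δ : Fin n → ℂ), (∀ j, δ j ≠ 0) ∧
      ∃ π : Equiv.Perm (Fin n),
        cartanC A D γ = Matrix.diagonal δ * (permMat π)ᵀ
          * (Matrix.reindex (finCongr hnn.symm) (finCongr hnn.symm) (cartanC A' D' γ'))
          * permMat π := by
  classical
  obtain ⟨π, hπinj, hπw⟩ := eigen_key D D' (aux_inj D' hD') τ σ hσ
  have hσsymm : ∀ b w, σ.symm (boxD D' b w) = boxD D (τ.symm b) (σ.symm w) := by
    intro b w
    apply σ.injective
    rw [σ.apply_symm_apply, hσ, τ.apply_symm_apply, σ.apply_symm_apply]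
  obtain ⟨π', hπ'inj, _⟩ := eigen_key D' D (aux_inj D hD) τ.symm σ.symm hσsymm
  have hnn : n = n' := by
    have h1 := Fintype.card_le_of_injective π hπinj
    have h2 := Fintype.card_le_of_injective π' hπ'inj
    simp only [Fintype.card_fin] at h1 h2
    omega
  subst hnn
  -- the matrix of τ
  set T := LinearMap.toMatrix' (τ : (Fin r → ℂ) →ₗ[ℂ] (Fin r' → ℂ)) with hTdef
  set S := LinearMap.toMatrix' (τ.symm : (Fin r' → ℂ) →ₗ[ℂ] (Fin r → ℂ)) with hSdef
  have hT : ∀ a, τ a = T *ᵥ a := by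
    intro a
    rw [hTdef, ← Matrix.toLin'_apply, Matrix.toLin'_toMatrix']
    rfl
  have hTS : T * S = 1 := by
    rw [hTdef, hSdef, ← LinearMap.toMatrix'_comp]
    have : (τ : (Fin r → ℂ) →ₗ[ℂ] (Fin r' → ℂ)) ∘ₗ (τ.symm : (Fin r' → ℂ) →ₗ[ℂ] (Fin r → ℂ))
        = LinearMap.id := by ext x; simp
    rw [this, LinearMap.toMatrix'_id]
  -- bilinear compatibility in matrix form
  have hM1 : (A⁻¹)ᵀ = c₀ • (Tᵀ * ((A'⁻¹)ᵀ * T)) := by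
    apply bilin_matrix
    intro p q
    have h := hτB (Pi.single p 1) (Pi.single q 1)
    rwa [hT, hT] at h
  have hM2 : A⁻¹ = c₀ • (Tᵀ * A'⁻¹ * T) := by
    have h := congrArg Matrix.transpose hM1
    rw [Matrix.transpose_transpose] at h
    rw [h]
    rw [Matrix.transpose_smul]
    congr 1
    rw [Matrix.transpose_mul, Matrix.transpose_mul, Matrix.transpose_transpose,
      Matrix.transpose_transpose, Matrix.mul_assoc]
  have hkey : T * A * Tᵀ = c₀⁻¹ • A' := by
    have h1 : T * (A * A⁻¹) * S = 1 := by
      rw [Matrix.mul_nonsing_inv A hA, Matrix.mul_one, hTS]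
    rw [hM2] at h1
    simp only [Matrix.mul_smul, Matrix.smul_mul, ← Matrix.mul_assoc] at h1
    rw [Matrix.mul_assoc (T * A * Tᵀ * A'⁻¹) T S, hTS, Matrix.mul_one] at h1
    have h2 := congrArg (· * A') h1
    simp only [Matrix.smul_mul, Matrix.one_mul, Matrix.mul_assoc] at h2
    rw [Matrix.nonsing_inv_mul A' hA', Matrix.mul_one] at h2
    rw [← Matrix.mul_assoc] at h2
    rw [← h2, smul_smul, inv_mul_cancel₀ hc₀, one_smul]
  -- column relation D_{·j} = Tᵀ *ᵥ D'_{·(π j)}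
  have hcolD : ∀ j, (fun m => D m j) = Tᵀ *ᵥ (fun i => D' i (π j)) := by
    intro j
    funext m
    have h := hπw j (Pi.single m 1)
    rw [hT] at h
    rw [Matrix.mulVec_single] at h
    simp only [Pi.single_apply, ite_mul, one_mul, zero_mul, mul_one,
      Finset.sum_ite_eq, Finset.sum_ite_eq', Finset.mem_univ, if_true] at h
    rw [h]
    simp [Matrix.mulVec, dotProduct, Matrix.transpose_apply]
  -- the permutation
  have hπbij : Function.Bijective π := Finite.injective_iff_bijective.mp hπinj
  set πe : Equiv.Perm (Fin n) := Equiv.ofBijective π hπbij with hπe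
  refine ⟨rfl, fun j => γ j * (c₀ * γ' (π j))⁻¹, ?_, πe.symm, ?_⟩
  · intro j
    exact mul_ne_zero (hγ j) (inv_ne_zero (mul_ne_zero hc₀ (hγ' (π j))))
  · rw [finCongr_refl, Matrix.reindex_refl_refl]
    ext j k
    rw [Matrix.mul_assoc, Matrix.mul_assoc, ← Matrix.mul_assoc ((permMat πe.symm)ᵀ),
      Matrix.diagonal_mul, permMat_conj]
    simp only [Equiv.symm_symm]
    have hπej : πe j = π j := rfl
    have hπek : πe k = π k := rfl
    rw [hπej, hπek, cartan_entry, cartan_entry, hcolD j, hcolD k,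
      Matrix.mulVec_mulVec, Matrix.mulVec_transpose, Matrix.dotProduct_mulVec,
      Matrix.vecMul_vecMul, ← Matrix.mul_assoc, hkey,
      ← Matrix.dotProduct_mulVec, Matrix.smul_mulVec, dotProduct_smul,
      smul_eq_mul]
    field_simp [hc₀, hγ' (π j)]


end
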